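/- Let ξ ∈ M and let θ₁, θ₂, θ₃ : Ω → M be measurable with ∫_Ω |θ_i(ω)|^{p(ω)} dP(ω) < ∞ for i = 1,2,3. Then for every s ∈ ℝ the function ω ↦ A(ω, ξ + θ₁(ω) + s θ₂(ω))·θ₃(ω) is P-integrable, and the map s ↦ ∫_Ω A(ω, ξ + θ₁(ω) + s θ₂(ω))·θ₃(ω) dP(ω) is continuous on ℝ. -/

import Mathlib

open MeasureTheory ENNReal
open scoped RealInnerProductSpace

/-- `Md d`: the space of symmetric `d × d` real matrices, identified (as in the paper)
with the Euclidean space `ℝ^{d(d+1)/2}`. -/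
abbrev Md (d : ℕ) : Type := EuclideanSpace ℝ (Fin (d * (d + 1) / 2))

lemma measA {d : ℕ} {Ω : Type*} [MeasurableSpace Ω] (A : Ω → Md d → Md d)
    (hAmeas : ∀ ξ : Md d, Measurable (fun ω => A ω ξ))
    (hAcont : ∀ ω, Continuous (A ω)) {η : Ω → Md d} (hη : Measurable η) :
    Measurable fun ω => A ω (η ω) := by
  have h := measurable_uncurry_of_continuous_of_measurable
    (u := fun ζ ω => A ω ζ) (fun ω => hAcont ω) hAmeas
  exact h.comp (hη.prodMk measurable_id)

lemma rpow_le_add {x pp a b : ℝ} (hx : 0 ≤ x) (ha : 0 < a) (hap : a ≤ pp) (hpb : pp ≤ b) :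
    x ^ pp ≤ x ^ a + x ^ b := by
  rcases le_or_gt x 1 with h1 | h1
  · rcases eq_or_lt_of_le hx with h0 | h0
    · rw [← h0]
      rw [Real.zero_rpow (by linarith), Real.zero_rpow ha.ne']
      positivity
    · have := Real.rpow_le_rpow_of_exponent_ge h0 h1 hap
      have hb : (0:ℝ) ≤ x ^ b := by positivity
      linarith
  · have := Real.rpow_le_rpow_of_exponent_le h1.le hpb
    have hb : (0:ℝ) ≤ x ^ a := by positivity
    linarith

lemma sum3_rpow {a b c pp : ℝ} (ha : 0 ≤ a) (hb : 0 ≤ b) (hc : 0 ≤ c) (hp : 0 ≤ pp) :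
    (a + b + c) ^ pp ≤ 3 ^ pp * (a ^ pp + b ^ pp + c ^ pp) := by
  set m := max a (max b c) with hm
  have hm0 : 0 ≤ m := le_trans ha (le_max_left _ _)
  have h1 : a + b + c ≤ 3 * m := by
    have h2 : a ≤ m := le_max_left _ _
    have h3 : b ≤ m := le_trans (le_max_left _ _) (le_max_right _ _)
    have h4 : c ≤ m := le_trans (le_max_right _ _) (le_max_right _ _)
    linarith
  have hmp : m ^ pp ≤ a ^ pp + b ^ pp + c ^ pp := by
    have hap : (0:ℝ) ≤ a ^ pp := by positivity
    have hbp : (0:ℝ) ≤ b ^ pp := by positivity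
    have hcp : (0:ℝ) ≤ c ^ pp := by positivity
    rcases max_cases a (max b c) with ⟨h, _⟩ | ⟨h, _⟩
    · rw [hm, h]; linarith
    · rcases max_cases b c with ⟨h', _⟩ | ⟨h', _⟩ <;> rw [hm, h, h'] <;> linarith
  calc (a + b + c) ^ pp ≤ (3 * m) ^ pp := Real.rpow_le_rpow (by positivity) h1 hp
    _ = 3 ^ pp * m ^ pp := Real.mul_rpow (by norm_num) hm0
    _ ≤ 3 ^ pp * (a ^ pp + b ^ pp + c ^ pp) := by
        have : (0:ℝ) ≤ 3 ^ pp := by positivity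
        nlinarith

lemma intg_of_lintegral {Ω : Type*} [MeasurableSpace Ω] {P : Measure Ω}
    {f : Ω → ℝ} (hf : Measurable f) (hf0 : ∀ ω, 0 ≤ f ω)
    (h : ∫⁻ ω, ENNReal.ofReal (f ω) ∂P < ⊤) : Integrable f P := by
  refine ⟨hf.aestronglyMeasurable, ?_⟩
  rw [hasFiniteIntegral_iff_norm]
  calc ∫⁻ ω, ENNReal.ofReal ‖f ω‖ ∂P = ∫⁻ ω, ENNReal.ofReal (f ω) ∂P := by
        apply lintegral_congr; intro ω; rw [Real.norm_of_nonneg (hf0 ω)]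
    _ < ⊤ := h

theorem stmt3
    {d : ℕ} (hd : 1 ≤ d)
    {Ω : Type*} [MeasurableSpace Ω] (P : Measure Ω) [IsProbabilityMeasure P]
    (p : Ω → ℝ) (hp : Measurable p)
    (α β : ℝ) (hα : 1 < α) (hαp : ∀ ω, α ≤ p ω) (hpβ : ∀ ω, p ω ≤ β)
    (A : Ω → Md d → Md d)
    (hAmeas : ∀ ξ : Md d, Measurable (fun ω => A ω ξ))
    (hAcont : ∀ ω, Continuous (A ω))
    (c₁ : ℝ) (hc₁ : 0 < c₁)
    (hAgrowth : ∀ ω (ξ : Md d), ‖A ω ξ‖ ^ (p ω / (p ω - 1)) ≤ c₁ * ‖ξ‖ ^ p ω + c₁)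
    (ξ : Md d) (θ₁ θ₂ θ₃ : Ω → Md d)
    (hθ₁ : Measurable θ₁) (hθ₂ : Measurable θ₂) (hθ₃ : Measurable θ₃)
    (hθ₁int : ∫⁻ ω, ENNReal.ofReal (‖θ₁ ω‖ ^ p ω) ∂P < ⊤)
    (hθ₂int : ∫⁻ ω, ENNReal.ofReal (‖θ₂ ω‖ ^ p ω) ∂P < ⊤)
    (hθ₃int : ∫⁻ ω, ENNReal.ofReal (‖θ₃ ω‖ ^ p ω) ∂P < ⊤) :
    (∀ s : ℝ, Integrable (fun ω => ⟪A ω (ξ + θ₁ ω + s • θ₂ ω), θ₃ ω⟫) P)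
    ∧ Continuous (fun s : ℝ => ∫ ω, ⟪A ω (ξ + θ₁ ω + s • θ₂ ω), θ₃ ω⟫ ∂P) := by
  have hα0 : 0 < α := by linarith
  set X : ℝ := ‖ξ‖ ^ α + ‖ξ‖ ^ β with hX
  set D : ℝ → Ω → ℝ := fun r ω =>
    c₁ * (3 ^ β * (X + ‖θ₁ ω‖ ^ p ω + (r ^ α + r ^ β) * ‖θ₂ ω‖ ^ p ω)) + c₁ + ‖θ₃ ω‖ ^ p ω
    with hD
  -- key pointwise bound
  have key : ∀ r : ℝ, 0 ≤ r → ∀ s : ℝ, |s| ≤ r → ∀ ω,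
      |⟪A ω (ξ + θ₁ ω + s • θ₂ ω), θ₃ ω⟫| ≤ D r ω := by
    intro r hr s hs ω
    set q := p ω with hq
    have hq1 : 1 < q := lt_of_lt_of_le hα (hαp ω)
    have hq0 : 0 ≤ q := by linarith
    have hconj : (q / (q - 1)).HolderConjugate q :=
      (Real.HolderConjugate.conjExponent hq1).symm
    set η := ξ + θ₁ ω + s • θ₂ ω with hη
    have h0 : |⟪A ω η, θ₃ ω⟫| ≤ ‖A ω η‖ * ‖θ₃ ω‖ := abs_real_inner_le_norm _ _
    have hyoung : ‖A ω η‖ * ‖θ₃ ω‖ ≤ ‖A ω η‖ ^ (q / (q - 1)) + ‖θ₃ ω‖ ^ q := by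
      have hy := Real.young_inequality_of_nonneg (norm_nonneg (A ω η)) (norm_nonneg (θ₃ ω)) hconj
      have h1 : ‖A ω η‖ ^ (q / (q - 1)) / (q / (q - 1)) ≤ ‖A ω η‖ ^ (q / (q - 1)) :=
        div_le_self (by positivity) hconj.lt.le
      have h2 : ‖θ₃ ω‖ ^ q / q ≤ ‖θ₃ ω‖ ^ q := div_le_self (by positivity) hq1.le
      linarith
    have hA : ‖A ω η‖ ^ (q / (q - 1)) ≤ c₁ * ‖η‖ ^ q + c₁ := hAgrowth ω η
    have hηn : ‖η‖ ≤ ‖ξ‖ + ‖θ₁ ω‖ + |s| * ‖θ₂ ω‖ := by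
      calc ‖η‖ ≤ ‖ξ + θ₁ ω‖ + ‖s • θ₂ ω‖ := norm_add_le _ _
        _ ≤ ‖ξ‖ + ‖θ₁ ω‖ + ‖s • θ₂ ω‖ := by linarith [norm_add_le ξ (θ₁ ω)]
        _ = ‖ξ‖ + ‖θ₁ ω‖ + |s| * ‖θ₂ ω‖ := by rw [norm_smul, Real.norm_eq_abs]
    have E1 : ‖η‖ ^ q ≤ 3 ^ β * (X + ‖θ₁ ω‖ ^ q + (r ^ α + r ^ β) * ‖θ₂ ω‖ ^ q) := by
      have step1 : ‖η‖ ^ q ≤ (‖ξ‖ + ‖θ₁ ω‖ + |s| * ‖θ₂ ω‖) ^ q :=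
        Real.rpow_le_rpow (norm_nonneg _) hηn hq0
      have step2 := sum3_rpow (norm_nonneg ξ) (norm_nonneg (θ₁ ω))
        (mul_nonneg (abs_nonneg s) (norm_nonneg (θ₂ ω))) hq0
      have h3q : (3:ℝ) ^ q ≤ 3 ^ β :=
        Real.rpow_le_rpow_of_exponent_le (by norm_num) (hpβ ω)
      have hξq : ‖ξ‖ ^ q ≤ X := rpow_le_add (norm_nonneg _) hα0 (hαp ω) (hpβ ω)
      have hsq : (|s| * ‖θ₂ ω‖) ^ q ≤ (r ^ α + r ^ β) * ‖θ₂ ω‖ ^ q := by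
        rw [Real.mul_rpow (abs_nonneg s) (norm_nonneg _)]
        have h1 : |s| ^ q ≤ r ^ q := Real.rpow_le_rpow (abs_nonneg s) hs hq0
        have h2 : r ^ q ≤ r ^ α + r ^ β := rpow_le_add hr hα0 (hαp ω) (hpβ ω)
        have h3 : (0:ℝ) ≤ ‖θ₂ ω‖ ^ q := by positivity
        nlinarith
      have hsum : ‖ξ‖ ^ q + ‖θ₁ ω‖ ^ q + (|s| * ‖θ₂ ω‖) ^ q ≤
          X + ‖θ₁ ω‖ ^ q + (r ^ α + r ^ β) * ‖θ₂ ω‖ ^ q := by linarith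
      have hnn : (0:ℝ) ≤ ‖ξ‖ ^ q + ‖θ₁ ω‖ ^ q + (|s| * ‖θ₂ ω‖) ^ q := by positivity
      have h3b : (0:ℝ) ≤ (3:ℝ) ^ β := by positivity
      calc ‖η‖ ^ q ≤ 3 ^ q * (‖ξ‖ ^ q + ‖θ₁ ω‖ ^ q + (|s| * ‖θ₂ ω‖) ^ q) :=
            le_trans step1 step2
        _ ≤ 3 ^ β * (X + ‖θ₁ ω‖ ^ q + (r ^ α + r ^ β) * ‖θ₂ ω‖ ^ q) :=
            mul_le_mul h3q hsum hnn h3b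
    have hmul : c₁ * ‖η‖ ^ q ≤
        c₁ * (3 ^ β * (X + ‖θ₁ ω‖ ^ q + (r ^ α + r ^ β) * ‖θ₂ ω‖ ^ q)) :=
      mul_le_mul_of_nonneg_left E1 hc₁.le
    simp only [hD]
    linarith
  have hDnn : ∀ r : ℝ, 0 ≤ r → ∀ ω, 0 ≤ D r ω := by
    intro r hr ω
    have : (0:ℝ) ≤ X := by positivity
    have h1 : (0:ℝ) ≤ ‖θ₁ ω‖ ^ p ω := by positivity
    have h2 : (0:ℝ) ≤ ‖θ₂ ω‖ ^ p ω := by positivity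
    have h3 : (0:ℝ) ≤ ‖θ₃ ω‖ ^ p ω := by positivity
    have h4 : (0:ℝ) ≤ (r ^ α + r ^ β) := by positivity
    have h5 : (0:ℝ) ≤ (3:ℝ) ^ β := by positivity
    simp only [hD]
    positivity
  -- integrability of D r
  have hI1 : Integrable (fun ω => ‖θ₁ ω‖ ^ p ω) P :=
    intg_of_lintegral (hθ₁.norm.pow hp) (fun ω => by positivity) hθ₁int
  have hI2 : Integrable (fun ω => ‖θ₂ ω‖ ^ p ω) P :=
    intg_of_lintegral (hθ₂.norm.pow hp) (fun ω => by positivity) hθ₂int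
  have hI3 : Integrable (fun ω => ‖θ₃ ω‖ ^ p ω) P :=
    intg_of_lintegral (hθ₃.norm.pow hp) (fun ω => by positivity) hθ₃int
  have hDint : ∀ r : ℝ, Integrable (D r) P := by
    intro r
    apply Integrable.add
    apply Integrable.add
    · exact ((((integrable_const X).add hI1).add
        (hI2.const_mul (r ^ α + r ^ β))).const_mul (3 ^ β)).const_mul c₁
    · exact integrable_const c₁
    · exact hI3
  -- measurability of the integrand
  have hmeas : ∀ s : ℝ, AEStronglyMeasurable
      (fun ω => ⟪A ω (ξ + θ₁ ω + s • θ₂ ω), θ₃ ω⟫) P := by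
    intro s
    have hη : Measurable (fun ω => ξ + θ₁ ω + s • θ₂ ω) :=
      (measurable_const.add hθ₁).add (hθ₂.const_smul s)
    exact ((measA A hAmeas hAcont hη).inner hθ₃).aestronglyMeasurable
  have hint : ∀ s : ℝ, Integrable (fun ω => ⟪A ω (ξ + θ₁ ω + s • θ₂ ω), θ₃ ω⟫) P := by
    intro s
    refine (hDint (|s| + 1)).mono' (hmeas s) (Filter.Eventually.of_forall fun ω => ?_)
    rw [Real.norm_eq_abs]
    exact key (|s| + 1) (by positivity) s (by linarith) ω
  refine ⟨hint, ?_⟩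
  rw [continuous_iff_continuousAt]
  intro s₀
  apply continuousAt_of_dominated (bound := D (|s₀| + 1))
  · exact Filter.Eventually.of_forall hmeas
  · filter_upwards [Metric.ball_mem_nhds s₀ one_pos] with s hs
    refine Filter.Eventually.of_forall fun ω => ?_
    rw [Real.norm_eq_abs]
    have hss : |s| ≤ |s₀| + 1 := by
      have : |s - s₀| < 1 := by rwa [Metric.mem_ball, Real.dist_eq] at hs
      calc |s| = |s₀ + (s - s₀)| := by ring_nf
        _ ≤ |s₀| + |s - s₀| := abs_add_le _ _
        _ ≤ |s₀| + 1 := by linarith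
    exact key (|s₀| + 1) (by positivity) s hss ω
  · exact hDint (|s₀| + 1)
  · refine Filter.Eventually.of_forall fun ω => ?_
    have hc : Continuous fun s : ℝ => ξ + θ₁ ω + s • θ₂ ω :=
      continuous_const.add (continuous_id.smul continuous_const)
    exact (((hAcont ω).comp hc).inner continuous_const).continuousAt
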